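/- arXiv:2407.05261 — 2 statements merged into one kernel-verified Lean document; each statement's English description precedes it below -/
import Mathlib

section
/- For nonzero vectors y₁,…,yₙ ∈ ℝ^d, the function f(X) = log(Σᵢ yᵢᵀ X yᵢ) satisfies the geodesic midpoint convexity inequality on the positive definite matrices: for all A, B ∈ ℙ_d, (Σᵢ yᵢᵀ (A♯B) yᵢ)² ≤ (Σᵢ yᵢᵀ A yᵢ)(Σᵢ yᵢᵀ B yᵢ), equivalently f(A♯B) ≤ ½ f(A) + ½ f(B). -/
open Matrix Set

/-- Real matrix power via the continuous functional calculus (spectral decomposition):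
for a Hermitian matrix, applies `fun λ => λ ^ t` to the eigenvalues. -/
noncomputable def mpow {d : ℕ} (A : Matrix (Fin d) (Fin d) ℝ) (t : ℝ) :
    Matrix (Fin d) (Fin d) ℝ :=
  cfc (fun x : ℝ => x ^ t) A

/-- The affine-invariant geodesic `A ♯ₜ B = A^{1/2} (A^{-1/2} B A^{-1/2})^t A^{1/2}`. -/
noncomputable def sharp {d : ℕ} (A B : Matrix (Fin d) (Fin d) ℝ) (t : ℝ) :
    Matrix (Fin d) (Fin d) ℝ :=
  mpow A (1/2) * mpow (mpow A (-(1/2)) * B * mpow A (-(1/2))) t * mpow A (1/2)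

section aux

variable {d : ℕ}

lemma herm_transpose_eq {S : Matrix (Fin d) (Fin d) ℝ} (hS : S.IsHermitian) : Sᵀ = S :=
  (conjTranspose_eq_transpose_of_trivial S) ▸ hS.eq

/-- Conjugation by an invertible matrix preserves positive definiteness (real case). -/
lemma posDef_conj {B N : Matrix (Fin d) (Fin d) ℝ} (hB : B.PosDef) (hN : IsUnit N) :
    (N * B * Nᴴ).PosDef := by
  rw [posDef_iff_dotProduct_mulVec]
  constructor
  · unfold Matrix.IsHermitian
    simp [conjTranspose_mul, conjTranspose_eq_transpose_of_trivial, herm_transpose_eq hB.1,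
      mul_assoc]
  · intro x hx
    have hNT : IsUnit Nᵀ := (isUnit_transpose N).mpr hN
    have hx' : Nᴴ *ᵥ x ≠ 0 := by
      rw [conjTranspose_eq_transpose_of_trivial]
      intro h
      exact hx <| (mulVec_injective_iff_isUnit.mpr hNT) (by simpa using h)
    have := hB.dotProduct_mulVec_pos hx'
    simpa [star_trivial, ← mulVec_mulVec, dotProduct_mulVec, ← mulVec_transpose,
      herm_transpose_eq, mul_assoc] using this

/-- Moving a symmetric matrix across a quadratic form. -/
lemma dot_conj {S : Matrix (Fin d) (Fin d) ℝ} (hS : S.IsHermitian)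
    (M : Matrix (Fin d) (Fin d) ℝ) (x y : Fin d → ℝ) :
    x ⬝ᵥ (S * M * S) *ᵥ y = (S *ᵥ x) ⬝ᵥ M *ᵥ (S *ᵥ y) := by
  rw [← mulVec_mulVec, ← mulVec_mulVec, dotProduct_mulVec, ← mulVec_transpose,
    herm_transpose_eq hS]

lemma rpow_contOn {A : Matrix (Fin d) (Fin d) ℝ} (hA : A.PosDef) (t : ℝ) :
    ContinuousOn (fun x : ℝ => x ^ t) (spectrum ℝ A) := by
  intro x hx
  have hx0 : 0 < x := by
    rw [hA.1.spectrum_real_eq_range_eigenvalues] at hx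
    obtain ⟨i, rfl⟩ := hx
    exact hA.eigenvalues_pos i
  exact (Real.continuousAt_rpow_const x t (Or.inl hx0.ne')).continuousWithinAt

lemma mpow_posDef {A : Matrix (Fin d) (Fin d) ℝ} (hA : A.PosDef) (t : ℝ) :
    (mpow A t).PosDef := by
  rw [mpow, hA.1.cfc_eq, Matrix.IsHermitian.cfc]
  have hU : IsUnit (hA.1.eigenvectorUnitary : Matrix (Fin d) (Fin d) ℝ) :=
    ⟨Unitary.toUnits hA.1.eigenvectorUnitary, rfl⟩
  refine posDef_conj ?_ hU
  rw [posDef_diagonal_iff]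
  intro i
  simpa using Real.rpow_pos_of_pos (hA.eigenvalues_pos i) t

lemma mpow_add {A : Matrix (Fin d) (Fin d) ℝ} (hA : A.PosDef) (s t : ℝ) :
    mpow A s * mpow A t = mpow A (s + t) := by
  rw [mpow, mpow, mpow, ← cfc_mul _ _ A (rpow_contOn hA s) (rpow_contOn hA t)]
  apply cfc_congr
  intro x hx
  have hx0 : 0 < x := by
    rw [hA.1.spectrum_real_eq_range_eigenvalues] at hx
    obtain ⟨i, rfl⟩ := hx
    exact hA.eigenvalues_pos i
  simp [Real.rpow_add hx0]

lemma mpow_half_sq {A : Matrix (Fin d) (Fin d) ℝ} (hA : A.PosDef) :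
    mpow A (1/2) * mpow A (1/2) = A := by
  rw [mpow_add hA]
  norm_num
  rw [mpow, show (fun x : ℝ => x ^ (1:ℝ)) = fun x : ℝ => x from funext fun x => Real.rpow_one x]
  exact cfc_id' ℝ A hA.1

lemma mpow_half_neg_half {A : Matrix (Fin d) (Fin d) ℝ} (hA : A.PosDef) :
    mpow A (1/2) * mpow A (-(1/2)) = 1 := by
  rw [mpow_add hA]
  norm_num
  rw [mpow]
  calc cfc (fun x : ℝ => x ^ (0:ℝ)) A = cfc (1 : ℝ → ℝ) A := by
        apply cfc_congr; intro x _; simp [Real.rpow_zero]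
    _ = 1 := cfc_one ℝ A hA.1

end aux

/-- Geodesic midpoint convexity of `X ↦ log (Σᵢ yᵢᵀ X yᵢ)`: Cauchy–Schwarz form and
the equivalent midpoint inequality. -/
theorem log_quad_midpoint {d n : ℕ} (y : Fin n → (Fin d → ℝ)) (hy : ∀ i, y i ≠ 0)
    (A B : Matrix (Fin d) (Fin d) ℝ) (hA : A.PosDef) (hB : B.PosDef) :
    (∑ i, y i ⬝ᵥ (sharp A B (1/2)) *ᵥ y i) ^ 2 ≤
        (∑ i, y i ⬝ᵥ A *ᵥ y i) * (∑ i, y i ⬝ᵥ B *ᵥ y i) ∧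
      Real.log (∑ i, y i ⬝ᵥ (sharp A B (1/2)) *ᵥ y i) ≤
        (1/2) * Real.log (∑ i, y i ⬝ᵥ A *ᵥ y i) +
          (1/2) * Real.log (∑ i, y i ⬝ᵥ B *ᵥ y i) := by
  set R := mpow A (1/2) with hRdef
  set N := mpow A (-(1/2)) with hNdef
  have hR : R.PosDef := mpow_posDef hA _
  have hN : N.PosDef := mpow_posDef hA _
  have hRN : R * N = 1 := mpow_half_neg_half hA
  have hNR : N * R = 1 := mul_eq_one_comm.mp hRN
  have hRR : R * R = A := mpow_half_sq hA
  set C := N * B * N with hCdef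
  have hC : C.PosDef := by
    have := posDef_conj hB hN.isUnit
    rwa [hN.1.eq] at this
  set T := mpow C (1/2) with hTdef
  have hT : T.PosDef := mpow_posDef hC _
  have hTT : T * T = C := mpow_half_sq hC
  have hsharp : sharp A B (1/2) = R * T * R := rfl
  -- quadratic form values
  set z : Fin n → (Fin d → ℝ) := fun i => R *ᵥ y i with hzdef
  have hm : ∀ i, y i ⬝ᵥ (sharp A B (1/2)) *ᵥ y i = z i ⬝ᵥ T *ᵥ z i := by
    intro i; rw [hsharp, dot_conj hR.1]
  have ha : ∀ i, y i ⬝ᵥ A *ᵥ y i = z i ⬝ᵥ z i := by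
    intro i
    have := dot_conj hR.1 1 (y i) (y i)
    rw [mul_one, hRR] at this
    simpa [one_mulVec] using this
  have hb : ∀ i, y i ⬝ᵥ B *ᵥ y i = z i ⬝ᵥ C *ᵥ z i := by
    intro i
    have hRCR : R * C * R = B := by
      rw [hCdef, show R * (N * B * N) * R = (R * N) * B * (N * R) by simp only [mul_assoc], hRN, hNR,
        one_mul, mul_one]
    rw [← hRCR, dot_conj hR.1]
  -- pointwise Cauchy–Schwarz
  have key : ∀ i, (z i ⬝ᵥ T *ᵥ z i) ^ 2 ≤ (z i ⬝ᵥ z i) * (z i ⬝ᵥ C *ᵥ z i) := by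
    intro i
    set w := T *ᵥ z i with hwdef
    have hww : w ⬝ᵥ w = z i ⬝ᵥ C *ᵥ z i := by
      have := dot_conj hT.1 1 (z i) (z i)
      rw [mul_one, hTT] at this
      simpa [one_mulVec] using this.symm
    have cs := Finset.sum_mul_sq_le_sq_mul_sq Finset.univ (z i) w
    calc (z i ⬝ᵥ T *ᵥ z i) ^ 2 = (∑ j, z i j * w j) ^ 2 := rfl
      _ ≤ (∑ j, z i j ^ 2) * (∑ j, w j ^ 2) := cs
      _ = (z i ⬝ᵥ z i) * (w ⬝ᵥ w) := by simp [dotProduct, sq]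
      _ = (z i ⬝ᵥ z i) * (z i ⬝ᵥ C *ᵥ z i) := by rw [hww]
  have hm_nonneg : ∀ i, 0 ≤ z i ⬝ᵥ T *ᵥ z i := by
    intro i
    have := hT.posSemidef.dotProduct_mulVec_nonneg (z i)
    simpa [star_trivial] using this
  have ha_nonneg : ∀ i, 0 ≤ z i ⬝ᵥ z i := fun i => Finset.sum_nonneg fun j _ => mul_self_nonneg _
  have hb_nonneg : ∀ i, 0 ≤ z i ⬝ᵥ C *ᵥ z i := by
    intro i
    have := hC.posSemidef.dotProduct_mulVec_nonneg (z i)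
    simpa [star_trivial] using this
  -- the Cauchy–Schwarz conjunct
  have main : (∑ i, y i ⬝ᵥ (sharp A B (1/2)) *ᵥ y i) ^ 2 ≤
      (∑ i, y i ⬝ᵥ A *ᵥ y i) * (∑ i, y i ⬝ᵥ B *ᵥ y i) := by
    simp only [hm, ha, hb]
    have hle : ∀ i, z i ⬝ᵥ T *ᵥ z i ≤ Real.sqrt ((z i ⬝ᵥ z i) * (z i ⬝ᵥ C *ᵥ z i)) := by
      intro i
      rw [← Real.sqrt_sq (hm_nonneg i)]
      exact Real.sqrt_le_sqrt (key i)
    have h1 : ∑ i, z i ⬝ᵥ T *ᵥ z i ≤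
        ∑ i, Real.sqrt ((z i ⬝ᵥ z i) * (z i ⬝ᵥ C *ᵥ z i)) :=
      Finset.sum_le_sum fun i _ => hle i
    have h2 : (∑ i, Real.sqrt ((z i ⬝ᵥ z i) * (z i ⬝ᵥ C *ᵥ z i))) ^ 2 ≤
        (∑ i, z i ⬝ᵥ z i) * (∑ i, z i ⬝ᵥ C *ᵥ z i) := by
      apply Finset.sum_sq_le_sum_mul_sum_of_sq_eq_mul
      · exact fun i _ => ha_nonneg i
      · exact fun i _ => hb_nonneg i
      · intro i _
        exact Real.sq_sqrt (mul_nonneg (ha_nonneg i) (hb_nonneg i))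
    have h0 : 0 ≤ ∑ i, z i ⬝ᵥ T *ᵥ z i := Finset.sum_nonneg fun i _ => hm_nonneg i
    calc (∑ i, z i ⬝ᵥ T *ᵥ z i) ^ 2
        ≤ (∑ i, Real.sqrt ((z i ⬝ᵥ z i) * (z i ⬝ᵥ C *ᵥ z i))) ^ 2 := by
          apply pow_le_pow_left₀ h0 h1
      _ ≤ _ := h2
  refine ⟨main, ?_⟩
  -- log form
  rcases Nat.eq_zero_or_pos n with hn | hn
  · subst hn
    simp
  · have hSharpPD : (sharp A B (1/2)).PosDef := by
      rw [hsharp]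
      have := posDef_conj hT hR.isUnit
      rwa [hR.1.eq] at this
    haveI : Nonempty (Fin n) := ⟨⟨0, hn⟩⟩
    have hSpos : 0 < ∑ i, y i ⬝ᵥ (sharp A B (1/2)) *ᵥ y i :=
      Finset.sum_pos (fun i _ => by simpa [star_trivial] using hSharpPD.dotProduct_mulVec_pos (hy i))
        Finset.univ_nonempty
    have hPpos : 0 < ∑ i, y i ⬝ᵥ A *ᵥ y i :=
      Finset.sum_pos (fun i _ => by simpa [star_trivial] using hA.dotProduct_mulVec_pos (hy i))
        Finset.univ_nonempty
    have hQpos : 0 < ∑ i, y i ⬝ᵥ B *ᵥ y i :=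
      Finset.sum_pos (fun i _ => by simpa [star_trivial] using hB.dotProduct_mulVec_pos (hy i))
        Finset.univ_nonempty
    set S := ∑ i, y i ⬝ᵥ (sharp A B (1/2)) *ᵥ y i
    set P := ∑ i, y i ⬝ᵥ A *ᵥ y i
    set Q := ∑ i, y i ⬝ᵥ B *ᵥ y i
    have hlog : Real.log (S ^ 2) ≤ Real.log (P * Q) :=
      Real.log_le_log (by positivity) main
    rw [Real.log_pow, Real.log_mul hPpos.ne' hQpos.ne'] at hlog
    push_cast at hlog
    linarith
end

section
/- The elementwise 1-norm ‖X‖₁ = Σ_{i,j} |X_{ij}| is convex on ℙ_d with respect to the Euclidean structure, but it is not geodesically convex with respect to the affine-invariant metric: there exist Σ₁, Σ₂ ∈ ℙ₃ such that ‖Σ₁♯Σ₂‖₁ > ½‖Σ₁‖₁ + ½‖Σ₂‖₁. An explicit counterexample is Σ₁ = I₃ and Σ₂ = [[1.0, 0.5, −0.6],[0.5, 1.2, 0.4],[−0.6, 0.4, 1.0]], for which ‖Σ₂^{1/2}‖₁ > 4.6 = ½‖Σ₁‖₁ + ½‖Σ₂‖₁. -/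
open Matrix Set

namespace EntrywiseAux

noncomputable abbrev M2 : Matrix (Fin 3) (Fin 3) ℝ := !![1, 0.5, -0.6; 0.5, 1.2, 0.4; -0.6, 0.4, 1]

lemma hM2sa : _root_.IsSelfAdjoint M2 := by
  rw [_root_.IsSelfAdjoint, Matrix.star_eq_conjTranspose]
  ext i j
  fin_cases i <;> fin_cases j <;> simp [Matrix.conjTranspose_apply]

lemma hM2posdef : M2.PosDef := by
  rw [Matrix.posDef_iff_dotProduct_mulVec]
  constructor
  · exact hM2sa
  · intro x hx
    obtain ⟨i, hi⟩ := Function.ne_iff.mp hx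
    simp only [Pi.zero_apply] at hi
    have h3 : x 0 ≠ 0 ∨ x 1 ≠ 0 ∨ x 2 ≠ 0 := by
      fin_cases i
      exacts [Or.inl hi, Or.inr (Or.inl hi), Or.inr (Or.inr hi)]
    simp only [star_trivial, dotProduct, Matrix.mulVec, Fin.sum_univ_three]
    norm_num
    simp [Matrix.vecHead, Matrix.vecTail]
    rcases h3 with hi | hi | hi <;>
      nlinarith [sq_nonneg (x 0 + (25/48)*(x 1) - (5/8)*(x 2)),
        sq_nonneg (x 1 + (1710/2159)*(x 2)), sq_nonneg (x 0), sq_nonneg (x 1), sq_nonneg (x 2),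
        mul_self_pos.mpr hi]

set_option maxHeartbeats 2000000 in
lemma hspec (x : ℝ) (hx : x ∈ spectrum ℝ M2) :
    (47531/1000000 ≤ x ∧ x ≤ 47631/1000000) ∨
    (301919/200000 ≤ x ∧ x ≤ 301939/200000) ∨
    (65709/40000 ≤ x ∧ x ≤ 65713/40000) := by
  rw [spectrum.mem_iff] at hx
  have hdet : (algebraMap ℝ (Matrix (Fin 3) (Fin 3) ℝ) x - M2).det = 0 := by
    by_contra h
    exact hx ((Matrix.isUnit_iff_isUnit_det _).mpr (isUnit_iff_ne_zero.mpr h))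
  rw [Matrix.det_fin_three] at hdet
  simp only [Matrix.sub_apply, Matrix.algebraMap_matrix_apply] at hdet
  norm_num [Fin.ext_iff] at hdet
  simp [Matrix.vecHead, Matrix.vecTail] at hdet
  have hcube : x^3 - (16/5)*x^2 + (263/100)*x - 59/500 = 0 := by linear_combination hdet
  rcases le_or_gt x (7/10) with h1 | h1
  · left
    have h1' : (0:ℝ) ≤ 7/10 - x := by linarith
    constructor <;>
      nlinarith [hcube, sq_nonneg x, sq_nonneg (x - 1/20), sq_nonneg (x - 1/10),
        mul_nonneg (mul_nonneg h1' h1') h1', sq_nonneg (x+1), mul_nonneg h1' h1']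
  rcases le_or_gt x (1578/1000) with h2 | h2
  · right; left
    have h1' : (0:ℝ) < x - 7/10 := by linarith
    have h2' : (0:ℝ) ≤ 1578/1000 - x := by linarith
    constructor <;>
      nlinarith [hcube, mul_nonneg h1'.le h2', sq_nonneg (x - 3/2), sq_nonneg (x - 151/100),
        sq_nonneg (x - 31/20), sq_nonneg (x - 8/5), mul_nonneg (mul_nonneg h1'.le h1'.le) h2',
        mul_nonneg (mul_nonneg h2' h2') h1'.le]
  · right; right
    have h2' : (0:ℝ) < x - 1578/1000 := by linarith
    constructor <;>
      nlinarith [hcube, sq_nonneg (x - 8/5), sq_nonneg (x - 13/8), sq_nonneg (x - 33/20),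
        sq_nonneg (x - 17/10), mul_pos h2' h2', mul_pos (mul_pos h2' h2') h2']

noncomputable def qf (x : ℝ) : ℝ := 172057/1000000 + (12213/12500)*x - (45893/250000)*x^2

set_option maxHeartbeats 1000000 in
lemma happrox (x : ℝ) (hx : x ∈ spectrum ℝ M2) : |Real.sqrt x - qf x| ≤ 1/1000 := by
  have h := hspec x hx
  have hb : ∀ a r : ℝ, 0 ≤ r → a ≤ r^2 → Real.sqrt a ≤ r := fun a r hr h2 => by
    calc Real.sqrt a ≤ Real.sqrt (r^2) := Real.sqrt_le_sqrt h2
    _ = r := Real.sqrt_sq hr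
  have hb2 : ∀ a r : ℝ, 0 ≤ r → r^2 ≤ a → r ≤ Real.sqrt a := fun a r hr h2 => by
    calc r = Real.sqrt (r^2) := (Real.sqrt_sq hr).symm
    _ ≤ Real.sqrt a := Real.sqrt_le_sqrt h2
  rw [abs_le, qf]
  rcases h with ⟨ha, hc⟩ | ⟨ha, hc⟩ | ⟨ha, hc⟩
  · have h1 := hb x (109123/500000) (by norm_num) (by nlinarith)
    have h2 := hb2 x (6813/31250) (by norm_num) (by nlinarith)
    constructor <;> nlinarith
  · have h1 := hb x (1228697/1000000) (by norm_num) (by nlinarith)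
    have h2 := hb2 x (245731/200000) (by norm_num) (by nlinarith)
    constructor <;> nlinarith
  · have h1 := hb x (20027/15625) (by norm_num) (by nlinarith)
    have h2 := hb2 x (160211/125000) (by norm_num) (by nlinarith)
    constructor <;> nlinarith

lemma cfc_psd (f : ℝ → ℝ) (hf : Continuous f) (h0 : ∀ x ∈ spectrum ℝ M2, 0 ≤ f x) :
    (cfc f M2).PosSemidef := by
  have hsa : IsSelfAdjoint (cfc (fun x => Real.sqrt (f x)) M2) := cfc_predicate _ _
  have h1 : cfc f M2
      = (cfc (fun x => Real.sqrt (f x)) M2)ᴴ * cfc (fun x => Real.sqrt (f x)) M2 := by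
    rw [← Matrix.star_eq_conjTranspose, hsa.star_eq, ← cfc_mul _ _ M2
      (by exact (Real.continuous_sqrt.comp hf).continuousOn)
      (by exact (Real.continuous_sqrt.comp hf).continuousOn)]
    exact cfc_congr fun x hx => (Real.mul_self_sqrt (h0 x hx)).symm
  rw [h1]
  exact Matrix.posSemidef_conjTranspose_mul_self _

noncomputable def B : Matrix (Fin 3) (Fin 3) ℝ := cfc Real.sqrt M2

lemma hsharp : sharp 1 M2 (1/2) = B := by
  have h1 : ∀ t : ℝ, mpow (1 : Matrix (Fin 3) (Fin 3) ℝ) t = 1 := by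
    intro t
    rw [mpow, cfc_apply_one]
    norm_num
  rw [sharp, h1, h1, one_mul, mul_one, one_mul, mul_one, mpow]
  exact cfc_congr fun x _ => (Real.sqrt_eq_rpow x).symm

noncomputable def Q : Matrix (Fin 3) (Fin 3) ℝ :=
  (172057/1000000 : ℝ) • 1 + (12213/12500 : ℝ) • M2 - (45893/250000 : ℝ) • (M2*M2)

lemma hQcfc : cfc qf M2 = Q := by
  have hM := hM2sa
  rw [show qf = fun x : ℝ => (172057/1000000 + (12213/12500)*x) - (45893/250000)*x^2 from rfl,
    cfc_sub (a := M2) (fun x => 172057/1000000 + (12213/12500)*x) (fun x => (45893/250000)*x^2)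
      (by fun_prop) (by fun_prop),
    cfc_add (a := M2) (fun _ => (172057/1000000 : ℝ)) (fun x => (12213/12500)*x)
      (by fun_prop) (by fun_prop),
    cfc_const_mul _ _ M2 (by fun_prop), cfc_const_mul _ _ M2 (by fun_prop),
    cfc_id' ℝ M2, cfc_pow_id M2, cfc_const _ M2, Algebra.algebraMap_eq_smul_one, sq, Q]

lemma hub : (Q + (1/1000 : ℝ) • 1 - B).PosSemidef := by
  have h : Q + (1/1000 : ℝ) • 1 - B = cfc (fun x => (qf x + 1/1000) - Real.sqrt x) M2 := by
    have hM := hM2sa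
    rw [cfc_sub (a := M2) (fun x => qf x + 1/1000) Real.sqrt (by unfold qf; fun_prop)
        (Real.continuous_sqrt.continuousOn),
      cfc_add (a := M2) qf (fun _ => (1/1000 : ℝ)) (by unfold qf; fun_prop) (by fun_prop),
      hQcfc, cfc_const _ M2, Algebra.algebraMap_eq_smul_one, B]
  rw [h]
  refine cfc_psd _ (by unfold qf; fun_prop) fun x hx => ?_
  have := happrox x hx
  rw [abs_le] at this
  linarith [this.1]

lemma hlb : (B - Q + (1/1000 : ℝ) • 1).PosSemidef := by
  have h : B - Q + (1/1000 : ℝ) • 1 = cfc (fun x => (Real.sqrt x - qf x) + 1/1000) M2 := by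
    have hM := hM2sa
    rw [cfc_add (a := M2) (fun x => Real.sqrt x - qf x) (fun _ => (1/1000 : ℝ))
        (by unfold qf; fun_prop) (by fun_prop),
      cfc_sub (a := M2) Real.sqrt qf (Real.continuous_sqrt.continuousOn) (by unfold qf; fun_prop),
      hQcfc, cfc_const _ M2, Algebra.algebraMap_eq_smul_one, B]
  rw [h]
  refine cfc_psd _ (by unfold qf; fun_prop) fun x hx => ?_
  have := happrox x hx
  rw [abs_le] at this
  linarith [this.2]

set_option maxHeartbeats 4000000 in
lemma key : (∑ i, ∑ j,
    |sharp (1 : Matrix (Fin 3) (Fin 3) ℝ)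
      (!![1, 0.5, -0.6; 0.5, 1.2, 0.4; -0.6, 0.4, 1]) (1/2) i j|) > 23/5 := by
  show (∑ i, ∑ j, |sharp (1 : Matrix (Fin 3) (Fin 3) ℝ) M2 (1/2) i j|) > 23/5
  rw [hsharp]
  have hBsa : IsSelfAdjoint B := cfc_predicate _ _
  have hsym : ∀ i j, B j i = B i j := fun i j => by
    conv_lhs => rw [← hBsa.star_eq]
    simp [Matrix.star_eq_conjTranspose, Matrix.conjTranspose_apply]
  have hU := (Matrix.posSemidef_iff_dotProduct_mulVec.mp hub).2
  have hL := (Matrix.posSemidef_iff_dotProduct_mulVec.mp hlb).2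
  have e0 := hU ![1,0,0]
  have e1 := hU ![0,1,0]
  have e2 := hU ![0,0,1]
  have f0 := hL ![1,0,0]
  have f1 := hL ![0,1,0]
  have f2 := hL ![0,0,1]
  have g01 := hL ![1,1,0]
  have g02 := hU ![1,0,1]
  have g12 := hL ![0,1,1]
  simp only [star_trivial, dotProduct, Matrix.mulVec, Fin.sum_univ_three,
    Matrix.add_apply, Matrix.sub_apply, Matrix.smul_apply, Matrix.one_apply, Q,
    Matrix.mul_apply, Matrix.cons_val_zero, Matrix.cons_val_one, Matrix.head_cons,
    Matrix.head_fin_const, Matrix.cons_val_fin_one, smul_eq_mul] at e0 e1 e2 f0 f1 f2 g01 g02 g12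
  norm_num [Fin.sum_univ_three, Fin.ext_iff] at e0 e1 e2 f0 f1 f2 g01 g02 g12
  simp [Matrix.vecHead, Matrix.vecTail] at e0 e1 e2 f0 f1 f2 g01 g02 g12
  rw [Fin.sum_univ_three]
  simp only [Fin.sum_univ_three]
  have h10 := hsym 0 1
  have h20 := hsym 0 2
  have h21 := hsym 1 2
  linarith [le_abs_self (B 0 0), le_abs_self (B 1 1), le_abs_self (B 2 2),
    le_abs_self (B 0 1), le_abs_self (B 1 0), le_abs_self (B 1 2), le_abs_self (B 2 1),
    neg_le_abs (B 0 2), neg_le_abs (B 2 0),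
    e0, e1, e2, f0, f1, f2, g01, g02, g12, h10, h20, h21]
end EntrywiseAux


/-- The elementwise 1-norm is Euclidean convex on `ℙ_d`, but not geodesically convex
w.r.t. the affine-invariant metric: for `Σ₁ = I₃` and the explicit `Σ₂` below,
`‖Σ₁ ♯ Σ₂‖₁ > ½‖Σ₁‖₁ + ½‖Σ₂‖₁` (note `½‖I₃‖₁ + ½‖Σ₂‖₁ = 4.6`). -/
theorem entrywise_one_norm {d : ℕ} :
    ConvexOn ℝ {X : Matrix (Fin d) (Fin d) ℝ | X.PosDef}
      (fun X : Matrix (Fin d) (Fin d) ℝ => ∑ i, ∑ j, |X i j|) ∧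
    ((!![1, 0.5, -0.6; 0.5, 1.2, 0.4; -0.6, 0.4, 1] : Matrix (Fin 3) (Fin 3) ℝ).PosDef ∧
      (∑ i, ∑ j,
          |sharp (1 : Matrix (Fin 3) (Fin 3) ℝ)
            (!![1, 0.5, -0.6; 0.5, 1.2, 0.4; -0.6, 0.4, 1]) (1/2) i j|) >
        (1/2) * (∑ i, ∑ j, |(1 : Matrix (Fin 3) (Fin 3) ℝ) i j|) +
          (1/2) * (∑ i, ∑ j,
            |(!![1, 0.5, -0.6; 0.5, 1.2, 0.4; -0.6, 0.4, 1] : Matrix (Fin 3) (Fin 3) ℝ) i j|)) := by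
  refine ⟨⟨?_, ?_⟩, EntrywiseAux.hM2posdef, ?_⟩
  · intro A hA B hB a b ha hb hab
    simp only [Set.mem_setOf_eq] at *
    rw [Matrix.posDef_iff_dotProduct_mulVec] at hA hB ⊢
    constructor
    · rw [Matrix.IsHermitian, Matrix.conjTranspose_add, Matrix.conjTranspose_smul,
        Matrix.conjTranspose_smul, hA.1, hB.1, star_trivial, star_trivial]
    · intro x hx
      have hQA := hA.2 hx
      have hQB := hB.2 hx
      have hexp : star x ⬝ᵥ (a • A + b • B) *ᵥ x
          = a * (star x ⬝ᵥ A *ᵥ x) + b * (star x ⬝ᵥ B *ᵥ x) := by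
        rw [Matrix.add_mulVec, Matrix.smul_mulVec, Matrix.smul_mulVec,
          dotProduct_add, dotProduct_smul, dotProduct_smul, smul_eq_mul, smul_eq_mul]
      rw [hexp]
      rcases ha.eq_or_lt with rfl | ha'
      · rw [zero_add] at hab
        subst hab
        simpa using hQB
      · nlinarith
  · intro X _ Y _ a b ha hb hab
    simp only [smul_eq_mul]
    calc (∑ i, ∑ j, |(a • X + b • Y) i j|)
        ≤ ∑ i, ∑ j, (a * |X i j| + b * |Y i j|) := by
          refine Finset.sum_le_sum fun i _ => Finset.sum_le_sum fun j _ => ?_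
          simp only [Matrix.add_apply, Matrix.smul_apply, smul_eq_mul]
          calc |a * X i j + b * Y i j| ≤ |a * X i j| + |b * Y i j| := abs_add_le _ _
          _ = a * |X i j| + b * |Y i j| := by
              rw [abs_mul, abs_mul, abs_of_nonneg ha, abs_of_nonneg hb]
      _ = a • (∑ i, ∑ j, |X i j|) + b • (∑ i, ∑ j, |Y i j|) := by
          simp only [Finset.sum_add_distrib, Finset.mul_sum, smul_eq_mul]
  · have hk := EntrywiseAux.key
    have h1 : (∑ i, ∑ j, |(1 : Matrix (Fin 3) (Fin 3) ℝ) i j|) = 3 := by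
      simp [Fin.sum_univ_three, Matrix.one_apply]
      norm_num
    have h2 : (∑ i, ∑ j,
        |(!![1, 0.5, -0.6; 0.5, 1.2, 0.4; -0.6, 0.4, 1] : Matrix (Fin 3) (Fin 3) ℝ) i j|)
        = 31/5 := by
      have ha : |(-0.6 : ℝ)| = 0.6 := by rw [abs_of_neg] <;> norm_num
      simp [Fin.sum_univ_three, ha, abs_of_nonneg]
      norm_num [abs_of_nonneg]
    rw [h1, h2]
    norm_num at hk ⊢
    linarith
end
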